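/- Let x ∈ ℝ^d be nonzero, y ∈ {1,…,C}, α > 0, and consider the squared-error objective ℓ(J) = ‖J x − e_y‖₂² over matrices J ∈ ℝ^{C×d} with ‖J‖_F² ≤ α. Then the matrix J* = β e_y xᵀ with β = min(√α/‖x‖₂, 1/‖x‖₂²) minimizes ℓ over the constraint set; in particular the minimizer has row y proportional to x and all other rows zero. -/

import Mathlib

/-- Euclidean norm of a vector in `ℝ^d`. -/
noncomputable def norm2 {d : ℕ} (v : Fin d → ℝ) : ℝ := Real.sqrt (∑ j, (v j) ^ 2)

/-- Squared Frobenius norm of a matrix. -/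
def frobSq {C d : ℕ} (J : Matrix (Fin C) (Fin d) ℝ) : ℝ := ∑ i, ∑ j, (J i j) ^ 2

/-- for nonzero `x`, a class `y`, and `α > 0`, the matrix
`J* = β e_y xᵀ` with `β = min(√α/‖x‖₂, 1/‖x‖₂²)` minimizes the squared-error objective
`‖J x − e_y‖₂²` over the constraint set `‖J‖_F² ≤ α`. -/
theorem stmt2 {C d : ℕ} (x : Fin d → ℝ) (hx : x ≠ 0) (y : Fin C) (α : ℝ) (hα : 0 < α)
    (β : ℝ) (hβ : β = min (Real.sqrt α / norm2 x) (1 / (norm2 x) ^ 2))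
    (Jstar : Matrix (Fin C) (Fin d) ℝ)
    (hJstar : Jstar = Matrix.vecMulVec (fun i => β * (if i = y then 1 else 0)) x) :
    frobSq Jstar ≤ α ∧
    ∀ J : Matrix (Fin C) (Fin d) ℝ, frobSq J ≤ α →
      ∑ a, (Jstar.mulVec x a - (if a = y then 1 else 0)) ^ 2 ≤
        ∑ a, (J.mulVec x a - (if a = y then 1 else 0)) ^ 2 := by
  set s : ℝ := ∑ j, x j ^ 2 with hs_def
  have hs : 0 < s := by
    obtain ⟨j, hj⟩ : ∃ j, x j ≠ 0 := by
      by_contra h; push_neg at h; exact hx (funext h)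
    exact Finset.sum_pos' (fun i _ => sq_nonneg _)
      ⟨j, Finset.mem_univ j, by positivity⟩
  have hn2 : norm2 x = Real.sqrt s := rfl
  have hsq : Real.sqrt s ^ 2 = s := Real.sq_sqrt hs.le
  have hss : 0 < Real.sqrt s := Real.sqrt_pos.mpr hs
  have hβ0 : 0 ≤ β := by
    rw [hβ, hn2]; apply le_min <;> positivity
  have hβA : β ≤ Real.sqrt α / Real.sqrt s := by
    rw [hβ, hn2]; exact min_le_left _ _
  have hJmul : ∀ a, Jstar.mulVec x a = β * (if a = y then 1 else 0) * s := by
    intro a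
    subst hJstar
    simp only [Matrix.mulVec, dotProduct, Matrix.vecMulVec_apply]
    have hxx : ∑ j, x j * x j = s := by
      rw [hs_def]; exact Finset.sum_congr rfl fun j _ => (sq (x j)).symm
    simp_rw [mul_assoc, ← Finset.mul_sum]
    rw [hxx]
  have hfro : frobSq Jstar = β ^ 2 * s := by
    subst hJstar
    simp only [frobSq, Matrix.vecMulVec_apply, mul_pow]
    simp_rw [← Finset.mul_sum]
    rw [show (∑ i, β ^ 2 * (if i = y then 1 else 0) ^ 2 * ∑ j, x j ^ 2)
        = ∑ i, (if i = y then β ^ 2 * s else 0) from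
      Finset.sum_congr rfl fun i _ => by
        by_cases h : i = y <;> simp [h, ← hs_def]]
    simp
  constructor
  · rw [hfro]
    have h1 : β ^ 2 ≤ α / s := by
      have : (Real.sqrt α / Real.sqrt s) ^ 2 = α / s := by
        rw [div_pow, hsq, Real.sq_sqrt hα.le]
      calc β ^ 2 ≤ (Real.sqrt α / Real.sqrt s) ^ 2 := by
            apply pow_le_pow_left₀ hβ0 hβA
        _ = α / s := this
    calc β ^ 2 * s ≤ (α / s) * s := by nlinarith
      _ = α := by field_simp
  · intro J hJ
    have hL : ∑ a, (Jstar.mulVec x a - (if a = y then 1 else 0)) ^ 2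
        = (β * s - 1) ^ 2 := by
      rw [show (∑ a, (Jstar.mulVec x a - (if a = y then 1 else 0)) ^ 2)
          = ∑ a, (if a = y then (β * s - 1) ^ 2 else 0) from
        Finset.sum_congr rfl fun a _ => by
          by_cases h : a = y <;> simp [hJmul, h]]
      simp
    rw [hL]
    have hR : (J.mulVec x y - 1) ^ 2
        ≤ ∑ a, (J.mulVec x a - (if a = y then 1 else 0)) ^ 2 := by
      have := Finset.single_le_sum
        (f := fun a => (J.mulVec x a - (if a = y then 1 else 0)) ^ 2)
        (fun i _ => sq_nonneg _) (Finset.mem_univ y)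
      simpa using this
    refine le_trans ?_ hR
    set t : ℝ := J.mulVec x y with ht_def
    have ht2 : t ^ 2 ≤ α * s := by
      have hCS' : (∑ j, J y j * x j) ^ 2 ≤ (∑ j, (J y j) ^ 2) * ∑ j, x j ^ 2 :=
        Finset.sum_mul_sq_le_sq_mul_sq _ _ _
      have hrow : ∑ j, (J y j) ^ 2 ≤ α :=
        le_trans (Finset.single_le_sum
          (f := fun i => ∑ j, (J i j) ^ 2)
          (fun i _ => Finset.sum_nonneg fun j _ => sq_nonneg _)
          (Finset.mem_univ y)) hJ
      have ht : t = ∑ j, J y j * x j := rfl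
      rw [ht]
      calc (∑ j, J y j * x j) ^ 2 ≤ (∑ j, (J y j) ^ 2) * s := hCS'
        _ ≤ α * s := by nlinarith
    rcases le_total (Real.sqrt α / Real.sqrt s) (1 / (norm2 x) ^ 2) with h | h
    · have hβeq : β = Real.sqrt α / Real.sqrt s := by
        rw [hβ, hn2, min_eq_left (by rwa [hn2] at h)]
      have hms : Real.sqrt s * Real.sqrt s = s := Real.mul_self_sqrt hs.le
      have hβs : β * s = Real.sqrt α * Real.sqrt s := by
        rw [hβeq]; field_simp; linear_combination -hsq
      have hc1 : Real.sqrt α * Real.sqrt s ≤ 1 := by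
        rw [hn2, hsq] at h
        calc Real.sqrt α * Real.sqrt s = (Real.sqrt α / Real.sqrt s) * s := by
              field_simp; linear_combination hsq
          _ ≤ (1 / s) * s := by nlinarith
          _ = 1 := by field_simp
      have htc : t ≤ Real.sqrt α * Real.sqrt s := by
        calc t ≤ |t| := le_abs_self t
          _ = Real.sqrt (t ^ 2) := (Real.sqrt_sq_eq_abs t).symm
          _ ≤ Real.sqrt (α * s) := Real.sqrt_le_sqrt ht2
          _ = Real.sqrt α * Real.sqrt s := Real.sqrt_mul hα.le s
      rw [hβs]
      nlinarith
    · have hβeq : β = 1 / s := by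
        rw [hβ, hn2, min_eq_right (by rwa [hn2] at h), hsq]
      have : β * s = 1 := by rw [hβeq]; field_simp
      rw [this]
      simpa using sq_nonneg (t - 1)
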